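/- arXiv:1707.01984 — 2 statements merged into one kernel-verified Lean document; each statement's English description precedes it below -/
import Mathlib

section
/- The generalized dynamical pruning with pruning function φ(T) = length(T) (the total length of the tree) does not satisfy the semigroup property: there exist a tree T and times s, t > 0 such that S_t(φ, S_s(φ, T)) ≠ S_{t+s}(φ, T). In particular, for a Y-shaped tree with two leaf edges of lengths a < b attached at a junction point x with a root edge of length c, the junction point x remains a leaf of S_t(φ,T) for all t with max{a,b} ≤ t ≤ a+b. -/
open scoped Classical

/-- Finite rooted (planted) binary trees with edge lengths: `nil` is the empty tree,
`leaf l` is a single stem of length `l` ending in a leaf, and `node l t₁ t₂` is a stem of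
length `l` ending in a junction carrying the subtrees `t₁` and `t₂`.
The Y-shaped tree of the statement is `node c (leaf a) (leaf b)`. -/
inductive PTree : Type
  | nil : PTree
  | leaf : ℝ → PTree
  | node : ℝ → PTree → PTree → PTree

namespace PTree

/-- The total length of a tree: the sum of its edge lengths. -/
noncomputable def lengthT : PTree → ℝ
  | .nil => 0
  | .leaf l => l
  | .node l a b => l + lengthT a + lengthT b

/-- Lengthen the stem of a (nonempty) tree by `l` (series reduction of a degree-2 point). -/
def graft (l : ℝ) : PTree → PTree
  | .nil => .nil
  | .leaf l' => .leaf (l + l')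
  | .node l' a b => .node (l + l') a b

/-- The generalized dynamical pruning `S_t(φ,·)` with `φ(T) = length(T)`:
a point `x` survives iff the total length of its descendant subtree `Δ_{x,T}` is `≥ t`. -/
noncomputable def pruneLength (t : ℝ) : PTree → PTree
  | .nil => .nil
  | .leaf l => if t ≤ l then .leaf (l - t) else .nil
  | .node l a b =>
      if t ≤ lengthT a + lengthT b then
        match pruneLength t a, pruneLength t b with
        | .nil, .nil => .leaf l
        | .nil, T => graft l T
        | T, .nil => graft l T
        | T₁, T₂ => .node l T₁ T₂
      else if t ≤ l + (lengthT a + lengthT b) then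
        .leaf (l + (lengthT a + lengthT b) - t)
      else .nil

/-- Pruning by total tree length does not satisfy the semigroup
property: there are a tree `T` and times `s, t > 0` with
`S_t(φ, S_s(φ,T)) ≠ S_{t+s}(φ,T)`.  In particular, for a Y-shaped tree with leaf edges of
lengths `a < b` attached at the junction `x` on top of a root edge of length `c`, the
junction remains a leaf of `S_t(φ,T)` (the pruned tree is a single edge of length `c`
with leaf `x`) for all `t` with `max{a,b} ≤ t ≤ a+b`. -/
theorem pruneLength_not_semigroup :
    (∃ (T : PTree) (s t : ℝ), 0 < s ∧ 0 < t ∧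
        pruneLength t (pruneLength s T) ≠ pruneLength (t + s) T)
    ∧ (∀ a b c t : ℝ, 0 < a → a < b → 0 < c → max a b ≤ t → t ≤ a + b →
        pruneLength t (node c (leaf a) (leaf b)) = leaf c) := by
  constructor
  · refine ⟨node 1 (leaf 1) (leaf 2), 2, 1, by norm_num, by norm_num, ?_⟩
    norm_num [pruneLength, lengthT, graft]
  · intro a b c t ha hab hc hmax hsum
    have hb : b ≤ t := le_trans (le_max_right a b) hmax
    have hat : ¬ t ≤ a := not_le.2 (lt_of_lt_of_le hab hb)
    simp only [pruneLength, lengthT]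
    simp only [if_pos hsum, if_neg hat]
    by_cases hbt : t ≤ b
    · have heq : t = b := le_antisymm hbt hb
      subst heq
      simp [graft]
    · rw [if_neg hbt]

end PTree
end

section
/- If T is an exponential critical binary Galton-Watson tree with edge-length parameter λ, then the total length of T has probability density function ℓ(x) = (1/x) e^{−λx} I₁(λx) for x > 0, where I₁ is the modified Bessel function of the first kind of order 1. -/
open Real MeasureTheory ProbabilityTheory
open scoped ENNReal

/-- Modified Bessel function of the first kind of order 1. -/
noncomputable def besselI1 (z : ℝ) : ℝ :=
  ∑' n : ℕ, (z / 2) ^ (2 * n + 1) / ((Nat.factorial n : ℝ) * Nat.factorial (n + 1))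

/-- The claimed total-length density `ℓ(x) = (1/x) e^{-λx} I₁(λx)` for `x > 0`. -/
noncomputable def ellDensity (lam x : ℝ) : ℝ :=
  if 0 < x then (1 / x) * Real.exp (-lam * x) * besselI1 (lam * x) else 0

/-- Combinatorial shapes of finite (planted) binary trees. -/
inductive Sh : Type
  | leaf : Sh
  | node : Sh → Sh → Sh

def Sh.enc : Sh → ℕ
  | .leaf => 0
  | .node a b => Nat.pair a.enc b.enc + 1

theorem Sh.enc_inj : Function.Injective Sh.enc := by
  intro a
  induction a with
  | leaf =>
    intro b h
    cases b with
    | leaf => rfl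
    | node c d => simp [Sh.enc] at h
  | node c d ihc ihd =>
    intro b h
    cases b with
    | leaf => simp [Sh.enc] at h
    | node e f =>
      simp only [Sh.enc, Nat.add_right_cancel_iff] at h
      have h' := Nat.pair_eq_pair.mp h
      rw [ihc h'.1, ihd h'.2]

instance : Countable Sh := ⟨Sh.enc, Sh.enc_inj⟩

namespace Sh

/-- Number of edges of a planted binary tree shape: a shape with `n+1` leaves has
`2n+1` edges (equivalently, `2n+1` vertices besides the root, one coin flip each). -/
def numEdges : Sh → ℕ
  | .leaf => 1
  | .node a b => 1 + a.numEdges + b.numEdges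

end Sh

/-- The law of the total length of an exponential critical binary Galton-Watson tree
`GW(λ)`: the shape `σ` occurs with probability `(1/2)^{numEdges σ}` (critical binary
branching: each vertex has 0 or 2 offspring with probability 1/2 each), and conditionally
on the shape the total length is the sum of `numEdges σ` i.i.d. Exp(λ) lengths, i.e. a
Gamma(numEdges σ, λ) random variable. -/
noncomputable def gwLengthLaw (lam : ℝ) : Measure ℝ :=
  Measure.sum fun σ : Sh =>
    ((1 : ℝ≥0∞) / 2) ^ σ.numEdges • gammaMeasure (σ.numEdges : ℝ) lam

namespace Sh

/-- Convert a shape to a mathlib binary tree. -/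
def toTree : Sh → Tree Unit
  | .leaf => .nil
  | .node a b => .node () a.toTree b.toTree

/-- Convert a mathlib binary tree to a shape. -/
def ofTree : Tree Unit → Sh
  | .nil => .leaf
  | .node _ a b => .node (ofTree a) (ofTree b)

/-- Shapes are equivalent to mathlib binary trees. -/
def equivTree : Sh ≃ Tree Unit where
  toFun := toTree
  invFun := ofTree
  left_inv := by intro s; induction s <;> simp [toTree, ofTree, *]
  right_inv := by intro t; induction t <;> simp [toTree, ofTree, *]

lemma numEdges_eq (s : Sh) : s.numEdges = 2 * s.toTree.numNodes + 1 := by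
  induction s with
  | leaf => rfl
  | node a b iha ihb => simp [numEdges, toTree, iha, ihb]; ring

end Sh

/-- Counting shapes by number of edges: there are `catalan n` shapes with `2n+1` edges. -/
lemma tsum_shapes (g : ℕ → ℝ≥0∞) :
    ∑' σ : Sh, g σ.numEdges = ∑' n : ℕ, (catalan n : ℝ≥0∞) * g (2 * n + 1) := by
  have h1 : ∑' σ : Sh, g σ.numEdges
      = ∑' t : Tree Unit, g (2 * t.numNodes + 1) := by
    rw [← Sh.equivTree.tsum_eq (fun t => g (2 * t.numNodes + 1))]
    exact tsum_congr fun σ => by rw [Sh.numEdges_eq]; rfl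
  rw [h1, ← (Equiv.sigmaFiberEquiv Tree.numNodes).tsum_eq
      (fun t => g (2 * t.numNodes + 1)), ENNReal.tsum_sigma']
  refine tsum_congr fun n => ?_
  have h2 : ∀ t : {t : Tree Unit // t.numNodes = n},
      g (2 * (Equiv.sigmaFiberEquiv Tree.numNodes ⟨n, t⟩).numNodes + 1)
        = g (2 * n + 1) := by
    rintro ⟨t, rfl⟩; rfl
  rw [tsum_congr h2]
  have e : {t : Tree Unit // t.numNodes = n}
      ≃ {t : Tree Unit // t ∈ Tree.treesOfNumNodesEq n} :=
    Equiv.subtypeEquivRight fun t => BinaryTree.mem_treesOfNumNodesEq.symm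
  calc ∑' _ : {t : Tree Unit // t.numNodes = n}, g (2 * n + 1)
      = ∑' _ : {t : Tree Unit // t ∈ Tree.treesOfNumNodesEq n}, g (2 * n + 1) :=
        e.tsum_eq fun _ => g (2 * n + 1)
    _ = ∑ _ ∈ Tree.treesOfNumNodesEq n, g (2 * n + 1) :=
        (Tree.treesOfNumNodesEq n).tsum_subtype fun _ => g (2 * n + 1)
    _ = (catalan n : ℝ≥0∞) * g (2 * n + 1) := by
        rw [Finset.sum_const, BinaryTree.treesOfNumNodesEq_card_eq_catalan, nsmul_eq_mul]

lemma catalan_mul_factorials (n : ℕ) :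
    (catalan n : ℝ) * ((Nat.factorial n : ℝ) * Nat.factorial (n + 1))
      = Nat.factorial (2 * n) := by
  have h : catalan n * (Nat.factorial n * Nat.factorial (n + 1))
      = Nat.factorial (2 * n) := by
    have hc : (n + 1) * catalan n = Nat.centralBinom n := succ_mul_catalan_eq_centralBinom n
    have hb : Nat.centralBinom n * Nat.factorial n * Nat.factorial n
        = Nat.factorial (2 * n) := by
      have h2n : 2 * n - n = n := by omega
      have := Nat.choose_mul_factorial_mul_factorial (Nat.le_mul_of_pos_left n (by norm_num) :
        n ≤ 2 * n)
      rw [h2n] at this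
      simpa [Nat.centralBinom] using this
    calc catalan n * (Nat.factorial n * Nat.factorial (n + 1))
        = ((n + 1) * catalan n) * Nat.factorial n * Nat.factorial n := by
          rw [Nat.factorial_succ]; ring
      _ = Nat.factorial (2 * n) := by rw [hc, hb]
  exact_mod_cast h

lemma summable_bessel_aux (c : ℝ) (hc : 0 ≤ c) :
    Summable fun n : ℕ => c ^ (2 * n + 1) / ((Nat.factorial n : ℝ) * Nat.factorial (n + 1)) := by
  refine Summable.of_nonneg_of_le (fun n => by positivity)
    (fun n => ?_) ((Real.summable_pow_div_factorial (c ^ 2)).mul_left c)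
  have h1 : c ^ (2 * n + 1) = c * (c ^ 2) ^ n := by ring
  rw [h1, mul_div_assoc]
  refine mul_le_mul_of_nonneg_left ?_ hc
  apply div_le_div_of_nonneg_left (by positivity) (by positivity)
  calc (Nat.factorial n : ℝ) = (Nat.factorial n : ℝ) * 1 := by ring
    _ ≤ (Nat.factorial n : ℝ) * Nat.factorial (n + 1) := by
        apply mul_le_mul_of_nonneg_left _ (by positivity)
        exact_mod_cast Nat.one_le_iff_ne_zero.mpr (Nat.factorial_ne_zero _)

/-- If `T` is an exponential critical binary Galton-Watson tree with
edge-length parameter `λ > 0`, then the total length of `T` has probability density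
function `ℓ(x) = (1/x) e^{-λx} I₁(λx)`, `x > 0`, with respect to Lebesgue measure. -/
theorem gw_total_length_density (lam : ℝ) (hlam : 0 < lam) :
    gwLengthLaw lam = volume.withDensity fun x => ENNReal.ofReal (ellDensity lam x) := by
  have hmeas : ∀ σ : Sh, Measurable fun x : ℝ =>
      ((1 : ℝ≥0∞) / 2) ^ σ.numEdges * gammaPDF (σ.numEdges : ℝ) lam x := fun σ =>
    ((measurable_gammaPDFReal _ lam).ennreal_ofReal).const_mul _
  have hstep : gwLengthLaw lam = volume.withDensity fun x =>
      ∑' σ : Sh, ((1 : ℝ≥0∞) / 2) ^ σ.numEdges * gammaPDF (σ.numEdges : ℝ) lam x := by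
    rw [gwLengthLaw]
    have h1 : ∀ σ : Sh, ((1 : ℝ≥0∞) / 2) ^ σ.numEdges • gammaMeasure (σ.numEdges : ℝ) lam
        = volume.withDensity fun x =>
            ((1 : ℝ≥0∞) / 2) ^ σ.numEdges * gammaPDF (σ.numEdges : ℝ) lam x := by
      intro σ
      have hg : Measurable (gammaPDF (σ.numEdges : ℝ) lam) :=
        (measurable_gammaPDFReal _ lam).ennreal_ofReal
      rw [gammaMeasure, ← withDensity_smul _ hg]
      rfl
    simp_rw [h1]
    rw [← withDensity_tsum hmeas]
    congr 1
    ext x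
    exact tsum_apply (Pi.summable.mpr fun _ => ENNReal.summable)
  rw [hstep]
  apply withDensity_congr_ae
  have h0 : ∀ᵐ x : ℝ, x ≠ 0 := by
    rw [ae_iff]
    have : {x : ℝ | ¬ x ≠ 0} = {0} := by ext x; simp
    rw [this]
    exact Real.volume_singleton
  filter_upwards [h0] with x hx
  rw [tsum_shapes (fun n => ((1 : ℝ≥0∞) / 2) ^ n * gammaPDF (n : ℝ) lam x)]
  rcases lt_or_gt_of_ne hx with hneg | hpos
  · simp [ellDensity, not_lt.mpr hneg.le, gammaPDF_of_neg hneg,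
      asymm hneg]
  · -- x > 0
    set f : ℕ → ℝ := fun n => (catalan n : ℝ) * ((1 / 2 : ℝ) ^ (2 * n + 1) *
      (lam ^ (2 * n + 1) / Nat.factorial (2 * n) * x ^ (2 * n) * Real.exp (-(lam * x))))
      with hf
    have hterm : ∀ n : ℕ, (catalan n : ℝ≥0∞) *
        (((1 : ℝ≥0∞) / 2) ^ (2 * n + 1) * gammaPDF ((2 * n + 1 : ℕ) : ℝ) lam x)
          = ENNReal.ofReal (f n) := by
      intro n
      have hg : gammaPDF ((2 * n + 1 : ℕ) : ℝ) lam x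
          = ENNReal.ofReal (lam ^ (2 * n + 1) / Nat.factorial (2 * n) * x ^ (2 * n)
              * Real.exp (-(lam * x))) := by
        rw [gammaPDF_of_nonneg hpos.le]
        congr 1
        have h1 : lam ^ (((2 * n + 1 : ℕ) : ℝ)) = lam ^ (2 * n + 1) := by
          rw [Real.rpow_natCast]
        have h2 : x ^ (((2 * n + 1 : ℕ) : ℝ) - 1) = x ^ (2 * n) := by
          have : ((2 * n + 1 : ℕ) : ℝ) - 1 = ((2 * n : ℕ) : ℝ) := by push_cast; ring
          rw [this, Real.rpow_natCast]
        have h3 : Real.Gamma ((2 * n + 1 : ℕ) : ℝ) = Nat.factorial (2 * n) := by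
          have : ((2 * n + 1 : ℕ) : ℝ) = ((2 * n : ℕ) : ℝ) + 1 := by push_cast; ring
          rw [this, Real.Gamma_nat_eq_factorial]
        rw [h1, h2, h3]
      rw [hg, hf]
      have hc : (catalan n : ℝ≥0∞) = ENNReal.ofReal (catalan n) := by
        simp [ENNReal.ofReal_natCast]
      have hp : ((1 : ℝ≥0∞) / 2) ^ (2 * n + 1)
          = ENNReal.ofReal ((1 / 2 : ℝ) ^ (2 * n + 1)) := by
        rw [ENNReal.ofReal_pow (by norm_num)]
        norm_num [ENNReal.ofReal_div_of_pos]
      rw [hc, hp, ← ENNReal.ofReal_mul (by positivity), ← ENNReal.ofReal_mul (by positivity)]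
    calc ∑' n : ℕ, (catalan n : ℝ≥0∞) *
          (((1 : ℝ≥0∞) / 2) ^ (2 * n + 1) * gammaPDF ((2 * n + 1 : ℕ) : ℝ) lam x)
        = ∑' n : ℕ, ENNReal.ofReal (f n) := tsum_congr hterm
      _ = ENNReal.ofReal (∑' n, f n) := by
          refine (ENNReal.ofReal_tsum_of_nonneg (fun n => ?_) ?_).symm
          · rw [hf]; positivity
          · have heq : ∀ n : ℕ, f n = (1 / x * Real.exp (-(lam * x)))
                * ((lam * x / 2) ^ (2 * n + 1)
                    / ((Nat.factorial n : ℝ) * Nat.factorial (n + 1))) := by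
              intro n
              rw [hf]
              have hcat := catalan_mul_factorials n
              have hfac : (Nat.factorial (2 * n) : ℝ) ≠ 0 := by positivity
              have hff : ((Nat.factorial n : ℝ) * Nat.factorial (n + 1)) ≠ 0 := by positivity
              field_simp
              linear_combination ((1 / 2 : ℝ) ^ (2 * n + 1) * lam ^ (2 * n + 1) * x ^ (2 * n)
                * x) * hcat
            rw [show f = fun n => (1 / x * Real.exp (-(lam * x)))
                * ((lam * x / 2) ^ (2 * n + 1)
                    / ((Nat.factorial n : ℝ) * Nat.factorial (n + 1))) from funext heq]
            exact (summable_bessel_aux (lam * x / 2)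
              (by positivity)).mul_left _
      _ = ENNReal.ofReal (ellDensity lam x) := by
          congr 1
          have heq : ∀ n : ℕ, f n = (1 / x * Real.exp (-(lam * x)))
              * ((lam * x / 2) ^ (2 * n + 1)
                  / ((Nat.factorial n : ℝ) * Nat.factorial (n + 1))) := by
            intro n
            rw [hf]
            have hcat := catalan_mul_factorials n
            have hfac : (Nat.factorial (2 * n) : ℝ) ≠ 0 := by positivity
            have hff : ((Nat.factorial n : ℝ) * Nat.factorial (n + 1)) ≠ 0 := by positivity
            field_simp
            linear_combination ((1 / 2 : ℝ) ^ (2 * n + 1) * lam ^ (2 * n + 1) * x ^ (2 * n)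
              * x) * hcat
          rw [tsum_congr heq, tsum_mul_left, ellDensity, if_pos hpos, besselI1, neg_mul]
end
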